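/- Fix n ≥ 1 and suppose that for every smooth Bruhat interval [u,w] in the symmetric group S_{n+1} there exists s ∈ S ∖ D_L(u) such that either su ≰ w or sw < w. Then every smooth Bruhat interval [u,w] in S_{n+1} has a special matching. -/

import Mathlib

set_option linter.unusedSectionVars false
namespace Paper

open CoxeterSystem List

variable {B W : Type*} [Group W] {M : CoxeterMatrix B}

/-- One step in the Bruhat order: multiply on the left by a reflection,
increasing the length. -/
def BruhatStep (cs : CoxeterSystem M W) (a b : W) : Prop :=
  ∃ t : W, cs.IsReflection t ∧ b = t * a ∧ cs.length a < cs.length b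

/-- The Bruhat order on a Coxeter group. -/
def BruhatLE (cs : CoxeterSystem M W) : W → W → Prop :=
  Relation.ReflTransGen (BruhatStep cs)

theorem BruhatLE.length_le {cs : CoxeterSystem M W} {a b : W} (h : BruhatLE cs a b) :
    cs.length a ≤ cs.length b := by
  induction h with
  | refl => exact le_rfl
  | tail _ h ih => obtain ⟨t, -, -, hlt⟩ := h; exact ih.trans hlt.le

theorem BruhatLE.length_lt {cs : CoxeterSystem M W} {a b : W} (h : BruhatLE cs a b)
    (hne : a ≠ b) : cs.length a < cs.length b := by
  rcases Relation.ReflTransGen.cases_head h with h' | ⟨c, hc, h'⟩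
  · exact absurd h' hne
  · obtain ⟨t, -, -, hlt⟩ := hc
    exact lt_of_lt_of_le hlt (BruhatLE.length_le h')

theorem BruhatLE.antisymm {cs : CoxeterSystem M W} {a b : W} (h1 : BruhatLE cs a b)
    (h2 : BruhatLE cs b a) : a = b := by
  by_contra hne
  exact absurd (BruhatLE.length_lt h1 hne) (not_lt.mpr (BruhatLE.length_le h2))

/-- The Bruhat interval `[u,w]`, as a type. -/
abbrev BruhatInterval (cs : CoxeterSystem M W) (u w : W) : Type _ :=
  {y : W // BruhatLE cs u y ∧ BruhatLE cs y w}

/-- The Bruhat interval `[u,w]` is a poset under the Bruhat order. -/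
instance (cs : CoxeterSystem M W) (u w : W) : PartialOrder (BruhatInterval cs u w) where
  le a b := BruhatLE cs a.1 b.1
  le_refl _ := Relation.ReflTransGen.refl
  le_trans _ _ _ := Relation.ReflTransGen.trans
  le_antisymm _ _ h1 h2 := Subtype.ext (BruhatLE.antisymm h1 h2)

/-- A principal order ideal `{v : v ≤ x}` of the Bruhat order, as a type. -/
abbrev BruhatIdeal (cs : CoxeterSystem M W) (x : W) : Type _ :=
  {v : W // BruhatLE cs v x}

/-- A principal order ideal of the Bruhat order is a poset under the Bruhat order. -/
instance (cs : CoxeterSystem M W) (x : W) : PartialOrder (BruhatIdeal cs x) where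
  le a b := BruhatLE cs a.1 b.1
  le_refl _ := Relation.ReflTransGen.refl
  le_trans _ _ _ := Relation.ReflTransGen.trans
  le_antisymm _ _ h1 h2 := Subtype.ext (BruhatLE.antisymm h1 h2)

/-! ### Posets: matchings, special matchings and zircons -/

/-- A matching of a poset: an involution matching each element with an element
covering it or covered by it. -/
def IsMatching {α : Type*} [PartialOrder α] (f : α → α) : Prop :=
  Function.Involutive f ∧ ∀ x : α, f x ⋖ x ∨ x ⋖ f x

/-- A special matching of a poset. -/
def IsSpecialMatching {α : Type*} [PartialOrder α] (f : α → α) : Prop :=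
  IsMatching f ∧ ∀ x y : α, x ⋖ y → f x = y ∨ f x < f y

/-- A zircon: a poset in which the principal order ideal of every non-minimal element is
finite and has a special matching. -/
def IsZircon (α : Type*) [PartialOrder α] : Prop :=
  ∀ x : α, (∃ y : α, y < x) →
    ({v : α | v ≤ x}.Finite ∧
      ∃ f : {v : α // v ≤ x} → {v : α // v ≤ x}, IsSpecialMatching f)

/-- The degree of `v` in the Bruhat graph of the interval `[u,w]`: the number of `y ∈ [u,w]`
such that `v⁻¹ * y` is a reflection. -/
noncomputable def bruhatDeg (cs : CoxeterSystem M W) (u w v : W) : ℕ :=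
  Nat.card {y : W // (BruhatLE cs u y ∧ BruhatLE cs y w) ∧ cs.IsReflection (v⁻¹ * y)}

/-- A Bruhat interval `[u,w]` is rationally smooth if `deg_{y,w}(y) = ℓ(w) - ℓ(y)` for all
`y ∈ [u,w]` (Carrell–Peterson). -/
def RationallySmooth (cs : CoxeterSystem M W) (u w : W) : Prop :=
  ∀ y : W, BruhatLE cs u y → BruhatLE cs y w →
    bruhatDeg cs y w y = cs.length w - cs.length y



open Classical in
/-- The "flip" permutation of `W × ℤˣ` associated to `c : W`. -/
noncomputable def flipPerm (c : W) : Equiv.Perm (W × ℤˣ) where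
  toFun x := (c * x.1 * c⁻¹, (if x.1 = c then -1 else 1) * x.2)
  invFun x := (c⁻¹ * x.1 * c, (if c⁻¹ * x.1 * c = c then -1 else 1) * x.2)
  left_inv := by
    rintro ⟨t, e⟩
    simp only [Prod.mk.injEq]
    constructor
    · group
    · have h : c⁻¹ * (c * t * c⁻¹) * c = t := by group
      rw [h]
      by_cases ht : t = c <;> simp [ht]
  right_inv := by
    rintro ⟨t, e⟩
    simp only [Prod.mk.injEq]
    constructor
    · group
    · by_cases ht : c⁻¹ * t * c = c
      · have : t = c := by
          have := congrArg (fun z => c * z * c⁻¹) ht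
          simpa [mul_assoc] using this
        simp [ht, this]
      · have h2 : ¬ (c * (c⁻¹ * t * c) * c⁻¹ = c) := by
          intro h
          apply ht
          have : c⁻¹ * t * c = c⁻¹ * c * c := by
            calc c⁻¹ * t * c = c⁻¹ * (c * (c⁻¹ * t * c) * c⁻¹) * c := by group
            _ = c⁻¹ * c * c := by rw [h]
          simpa using this
        simp [ht]

open Classical in
theorem flipPerm_apply (c : W) (t : W) (e : ℤˣ) :
    flipPerm c (t, e) = (c * t * c⁻¹, (if t = c then -1 else 1) * e) := rfl

/-- Inversion-like sequence for a list of group elements. -/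
def risW : List W → List W
  | [] => []
  | c :: l => (l.prod⁻¹ * c * l.prod) :: risW l

open Classical in
/-- The sign of `t` against a list of "inversions". -/
noncomputable def sgn (t : W) (L : List W) : ℤˣ :=
  (L.map (fun r => if t = r then (-1 : ℤˣ) else 1)).prod

theorem sgn_nil (t : W) : sgn t ([] : List W) = 1 := rfl

open Classical in
theorem sgn_cons (t c : W) (L : List W) :
    sgn t (c :: L) = (if t = c then (-1:ℤˣ) else 1) * sgn t L := by
  simp [sgn]

theorem sgn_append (t : W) (L L' : List W) :
    sgn t (L ++ L') = sgn t L * sgn t L' := by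
  simp [sgn]

theorem sgn_eq_one_of_not_mem {t : W} {L : List W} (h : t ∉ L) : sgn t L = 1 := by
  induction L with
  | nil => rfl
  | cons c L ih =>
    rw [sgn_cons]
    have h1 : t ≠ c := fun hh => h (hh ▸ List.mem_cons_self (a := c) (l := L))
    have h2 : t ∉ L := fun hh => h (List.mem_cons_of_mem c hh)
    simp [h1, ih h2]

theorem mem_of_sgn_ne_one {t : W} {L : List W} (h : sgn t L ≠ 1) : t ∈ L := by
  by_contra hm
  exact h (sgn_eq_one_of_not_mem hm)

theorem prod_flipPerm_apply (l : List W) (t : W) (e : ℤˣ) :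
    (l.map flipPerm).prod (t, e) = (l.prod * t * l.prod⁻¹, sgn t (risW l) * e) := by
  induction l generalizing e with
  | nil => simp [risW, sgn_nil]
  | cons c l ih =>
    have : ((c :: l).map flipPerm).prod (t, e) = flipPerm c ((l.map flipPerm).prod (t, e)) := by
      simp [List.map_cons, List.prod_cons, Equiv.Perm.mul_apply]
    rw [this, ih, flipPerm_apply]
    have hfst : c * (l.prod * t * l.prod⁻¹) * c⁻¹ = (c :: l).prod * t * ((c :: l).prod)⁻¹ := by
      simp [List.prod_cons, mul_assoc]
    have hcond : (l.prod * t * l.prod⁻¹ = c) ↔ (t = l.prod⁻¹ * c * l.prod) := by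
      constructor
      · intro h; rw [← h]; group
      · intro h; rw [h]; group
    rw [Prod.mk.injEq]
    constructor
    · exact hfst
    · rw [show risW (c :: l) = (l.prod⁻¹ * c * l.prod) :: risW l from rfl, sgn_cons]
      by_cases hc : t = l.prod⁻¹ * c * l.prod
      · have h1 : l.prod * t * l.prod⁻¹ = c := hcond.mpr hc
        rw [if_pos h1, if_pos hc]
        simp [mul_assoc]
      · have h1 : ¬ (l.prod * t * l.prod⁻¹ = c) := fun h => hc (hcond.mp h)
        rw [if_neg h1, if_neg hc]
        simp [mul_assoc]

/-! ### Braid relations for flip permutations -/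

section Braid

variable {a b : W}

theorem prod_map_flipPerm_eq_one {l : List W} (hprod : l.prod = 1)
    (hris : ∃ P : List W, risW l = P ++ P) : (l.map flipPerm).prod = 1 := by
  obtain ⟨P, hP⟩ := hris
  refine Equiv.ext fun x => ?_
  obtain ⟨t, e⟩ := x
  rw [prod_flipPerm_apply, hprod, hP, sgn_append]
  simp [Int.units_mul_self]

theorem flip_braid1 (ha : a * a = 1) : (flipPerm a * flipPerm a : Equiv.Perm (W × ℤˣ)) = 1 := by
  have h1 : (flipPerm a * flipPerm a : Equiv.Perm (W × ℤˣ))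
      = (([a, a] : List W).map flipPerm).prod := by
    simp
  rw [h1]
  apply prod_map_flipPerm_eq_one
  · simpa using ha
  · refine ⟨[a], ?_⟩
    have ia : a⁻¹ = a := inv_eq_of_mul_eq_one_right ha
    simp [risW, ia, ← mul_assoc, ha]

theorem flip_braid2 (ha : a * a = 1) (hb : b * b = 1) (h2 : (a * b)^2 = 1) :
    ((flipPerm a * flipPerm b : Equiv.Perm (W × ℤˣ)))^2 = 1 := by
  have ia : a⁻¹ = a := inv_eq_of_mul_eq_one_right ha
  have ib : b⁻¹ = b := inv_eq_of_mul_eq_one_right hb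
  have h2' : a * (b * (a * b)) = 1 := by rw [← h2, pow_two]; simp only [mul_assoc]
  have k : b * (a * b) = a := by
    have := inv_eq_of_mul_eq_one_right h2'
    rw [ia] at this; exact this.symm
  have h1 : ((flipPerm a * flipPerm b : Equiv.Perm (W × ℤˣ)))^2
      = (([a, b, a, b] : List W).map flipPerm).prod := by
    simp only [List.map_cons, List.map_nil, List.prod_cons, List.prod_nil, mul_one, pow_two,
      mul_assoc]
  rw [h1]
  apply prod_map_flipPerm_eq_one
  · show ([a, b, a, b] : List W).prod = 1
    simp only [List.prod_cons, List.prod_nil, mul_one]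
    exact h2'
  · refine ⟨[a, b], ?_⟩
    show [_, _, _, _] = _
    simp only [risW, List.prod_cons, List.prod_nil, mul_one, one_mul, inv_one,
      List.cons_append, List.nil_append]
    refine List.cons_eq_cons.mpr ⟨?_, List.cons_eq_cons.mpr ⟨?_, List.cons_eq_cons.mpr
      ⟨?_, rfl⟩⟩⟩
    · have t1 : (b*(a*b))⁻¹ * a * (b*(a*b)) = (b*(a*b)) * (a*(b*(a*b))) := by
        simp only [mul_inv_rev, ia, ib, mul_assoc]
      rw [t1, k, ha, mul_one]
    · have t1 : (a*b)⁻¹ * b * (a*b) = b * (a * (b * (a * b))) := by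
        simp only [mul_inv_rev, ia, ib, mul_assoc]
      rw [t1, k, ha, mul_one]
    · have t1 : b⁻¹ * a * b = b * (a * b) := by simp only [ib, mul_assoc]
      rw [t1, k]

theorem flip_braid3 (ha : a * a = 1) (hb : b * b = 1) (h3 : (a * b)^3 = 1) :
    ((flipPerm a * flipPerm b : Equiv.Perm (W × ℤˣ)))^3 = 1 := by
  have ia : a⁻¹ = a := inv_eq_of_mul_eq_one_right ha
  have ib : b⁻¹ = b := inv_eq_of_mul_eq_one_right hb
  have h3' : a * (b * (a * (b * (a * b)))) = 1 := by
    rw [← h3, pow_succ, pow_two]; simp only [mul_assoc]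
  have k1 : b * (a * (b * (a * b))) = a := by
    have := inv_eq_of_mul_eq_one_right h3'
    rw [ia] at this; exact this.symm
  have k3 : b * (a * b) = a * (b * a) := by
    have t1 : (b * (a * b)) * (a * b) = a := by
      simp only [mul_assoc]; exact k1
    have t2 := eq_mul_inv_of_mul_eq t1
    rwa [mul_inv_rev, ia, ib] at t2
  have k4 : b * (a * (b * (a * (b * (a * b))))) = b := by
    have t1 : b * (a * (b * (a * (b * (a * b))))) = (b * (a * (b * (a * b)))) * (a * b) := by
      simp only [mul_assoc]
    rw [t1, k1, ← mul_assoc, ha, one_mul]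
  have k5 : b * (a * (b * (a * (b * (a * (b * (a * b))))))) = a * (b * a) := by
    have t1 : b * (a * (b * (a * (b * (a * (b * (a * b)))))))
        = (b * (a * (b * (a * b)))) * (a * (b * (a * b))) := by
      simp only [mul_assoc]
    rw [t1, k1, ← mul_assoc, ha, one_mul, k3]
  have h1 : ((flipPerm a * flipPerm b : Equiv.Perm (W × ℤˣ)))^3
      = (([a, b, a, b, a, b] : List W).map flipPerm).prod := by
    simp only [List.map_cons, List.map_nil, List.prod_cons, List.prod_nil, mul_one, pow_succ,
      pow_zero, one_mul, mul_assoc]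
  rw [h1]
  apply prod_map_flipPerm_eq_one
  · show ([a, b, a, b, a, b] : List W).prod = 1
    simp only [List.prod_cons, List.prod_nil, mul_one]
    exact h3'
  · refine ⟨[a, a * (b * a), b], ?_⟩
    show [_, _, _, _, _, _] = _
    simp only [risW, List.prod_cons, List.prod_nil, mul_one, one_mul, inv_one,
      List.cons_append, List.nil_append]
    refine List.cons_eq_cons.mpr ⟨?_, List.cons_eq_cons.mpr ⟨?_, List.cons_eq_cons.mpr
      ⟨?_, List.cons_eq_cons.mpr ⟨?_, List.cons_eq_cons.mpr ⟨?_, rfl⟩⟩⟩⟩⟩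
    · have t1 : (b*(a*(b*(a*b))))⁻¹ * a * (b*(a*(b*(a*b))))
          = (b*(a*(b*(a*b)))) * (a * (b*(a*(b*(a*b))))) := by
        simp only [mul_inv_rev, ia, ib, mul_assoc]
      rw [t1, k1, ha, mul_one]
    · have t1 : (a*(b*(a*b)))⁻¹ * b * (a*(b*(a*b)))
          = b * (a * (b * (a * (b * (a * (b * (a * b))))))) := by
        simp only [mul_inv_rev, ia, ib, mul_assoc]
      rw [t1, k5]
    · have t1 : (b*(a*b))⁻¹ * a * (b*(a*b))
          = b * (a * (b * (a * (b * (a * b))))) := by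
        simp only [mul_inv_rev, ia, ib, mul_assoc]
      rw [t1, k4]
    · have t1 : (a*b)⁻¹ * b * (a*b) = b * (a * (b * (a * b))) := by
        simp only [mul_inv_rev, ia, ib, mul_assoc]
      rw [t1, k1]
    · have t1 : b⁻¹ * a * b = b * (a * b) := by simp only [ib, mul_assoc]
      rw [t1, k3]

end Braid

/-! ### The reflection representation on `W × ℤˣ` -/

section Rep

theorem risW_map_simple (cs : CoxeterSystem M W) (ω : List B) :
    risW (ω.map cs.simple) = cs.rightInvSeq ω := by
  induction ω with
  | nil => rfl
  | cons i ω ih =>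
    show (((ω.map cs.simple).prod)⁻¹ * cs.simple i * (ω.map cs.simple).prod)
      :: risW (ω.map cs.simple) = _
    rw [ih]
    rfl

theorem aLiftable {n : ℕ} (cs : CoxeterSystem (CoxeterMatrix.Aₙ n) W) :
    CoxeterMatrix.IsLiftable (CoxeterMatrix.Aₙ n)
      (fun i => (flipPerm (cs.simple i) : Equiv.Perm (W × ℤˣ))) := by
  intro i j
  have hs := cs.simple_mul_simple_pow i j
  have hi : cs.simple i * cs.simple i = 1 := cs.simple_mul_simple_self i
  have hval : (CoxeterMatrix.Aₙ n) i j =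
      (if i = j then 1 else (if (j : ℕ) + 1 = i ∨ (i : ℕ) + 1 = j then 3 else 2)) := rfl
  by_cases hij : i = j
  · subst hij
    rw [hval] at hs ⊢
    simp only [eq_self_iff_true, if_true, pow_one] at hs ⊢
    exact flip_braid1 hi
  · have hj : cs.simple j * cs.simple j = 1 := cs.simple_mul_simple_self j
    by_cases hadj : (j : ℕ) + 1 = i ∨ (i : ℕ) + 1 = j
    · rw [hval] at hs ⊢
      simp only [if_neg hij, if_pos hadj] at hs ⊢
      exact flip_braid3 hi hj hs
    · rw [hval] at hs ⊢
      simp only [if_neg hij, if_neg hadj] at hs ⊢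
      exact flip_braid2 hi hj hs

variable {n : ℕ} (cs : CoxeterSystem (CoxeterMatrix.Aₙ n) W)

/-- The reflection representation of `W` on `W × ℤˣ`. -/
noncomputable def phi : W →* Equiv.Perm (W × ℤˣ) :=
  cs.lift ⟨fun i => flipPerm (cs.simple i), aLiftable cs⟩

theorem phi_simple (i : Fin n) : phi cs (cs.simple i) = flipPerm (cs.simple i) :=
  cs.lift_apply_simple (aLiftable cs) i

theorem phi_wordProd (ω : List (Fin n)) :
    phi cs (cs.wordProd ω) = ((ω.map cs.simple).map flipPerm).prod := by
  have h1 : cs.wordProd ω = (ω.map cs.simple).prod := rfl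
  rw [h1, MonoidHom.map_list_prod, List.map_map, List.map_map]
  congr 1
  apply List.map_congr_left
  intro i _
  exact phi_simple cs i

theorem phi_apply_word (ω : List (Fin n)) (t : W) (e : ℤˣ) :
    phi cs (cs.wordProd ω) (t, e)
      = (cs.wordProd ω * t * (cs.wordProd ω)⁻¹, sgn t (cs.rightInvSeq ω) * e) := by
  rw [phi_wordProd, prod_flipPerm_apply, risW_map_simple]
  rfl

theorem phi_apply_fst (w t : W) (e : ℤˣ) : (phi cs w (t, e)).1 = w * t * w⁻¹ := by
  obtain ⟨ω, -, rfl⟩ := cs.exists_reduced_word' w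
  rw [phi_apply_word]

theorem phi_apply_snd (w t : W) (e : ℤˣ) :
    (phi cs w (t, e)).2 = (phi cs w (t, 1)).2 * e := by
  obtain ⟨ω, -, rfl⟩ := cs.exists_reduced_word' w
  rw [phi_apply_word, phi_apply_word]
  simp

theorem phi_refl_self {t : W} (ht : cs.IsReflection t) (e : ℤˣ) :
    phi cs t (t, e) = (t, -e) := by
  obtain ⟨v, i, rfl⟩ := ht
  set t := v * cs.simple i * v⁻¹ with hts
  have h1 : phi cs v⁻¹ (t, e) = (cs.simple i, (phi cs v⁻¹ (t, e)).2) := by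
    refine Prod.ext ?_ rfl
    rw [phi_apply_fst]
    rw [hts]; group
  have h2 : phi cs v (phi cs v⁻¹ (t, e)) = (t, e) := by
    have : phi cs v * phi cs v⁻¹ = 1 := by rw [← map_mul]; simp
    calc phi cs v (phi cs v⁻¹ (t, e)) = (phi cs v * phi cs v⁻¹) (t, e) := rfl
    _ = (t, e) := by rw [this]; rfl
  set d := (phi cs v⁻¹ (t, e)).2 with hd
  have h3 : phi cs (cs.simple i) (cs.simple i, d) = (cs.simple i, -d) := by
    rw [phi_simple, flipPerm_apply, if_pos rfl]
    refine Prod.ext ?_ ?_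
    · show cs.simple i * cs.simple i * (cs.simple i)⁻¹ = cs.simple i
      group
    · show (-1 : ℤˣ) * d = -d
      simp
  have h4 : phi cs t (t, e) = phi cs v (phi cs (cs.simple i) (phi cs v⁻¹ (t, e))) := by
    rw [hts]
    have : phi cs (v * cs.simple i * v⁻¹) = phi cs v * phi cs (cs.simple i) * phi cs v⁻¹ := by
      simp [map_mul]
    rw [this]
    rfl
  rw [h4, h1, h3]
  have h5 : phi cs v (cs.simple i, d) = (t, e) := by rw [← h1]; exact h2
  refine Prod.ext ?_ ?_
  · rw [phi_apply_fst, hts]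
  · rw [phi_apply_snd]
    have h6 := congrArg Prod.snd h5
    rw [phi_apply_snd] at h6
    have h6' : (phi cs v (cs.simple i, 1)).2 * d = e := h6
    rw [mul_neg, h6']

theorem isRightInversion_iff_sign {w t : W} (ht : cs.IsReflection t) :
    cs.IsRightInversion w t ↔ (phi cs w (t, 1)).2 = -1 := by
  constructor
  · rintro ⟨-, hlt⟩
    have hw : w = (w * t) * t := by
      rw [mul_assoc, ht.mul_self, mul_one]
    obtain ⟨ω', hω', hw'⟩ := cs.exists_reduced_word' (w * t)
    have hnm : t ∉ cs.rightInvSeq ω' := by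
      intro hmem
      have := (cs.isRightInversion_of_mem_rightInvSeq hω' hmem).2
      rw [← hw'] at this
      rw [mul_assoc, ht.mul_self, mul_one] at this
      omega
    have hsgn : sgn t (cs.rightInvSeq ω') = 1 := sgn_eq_one_of_not_mem hnm
    have h2 : phi cs w (t, 1) = phi cs (w * t) (phi cs t (t, 1)) := by
      rw [← Equiv.Perm.mul_apply, ← map_mul, mul_assoc, ht.mul_self, mul_one]
    rw [h2, phi_refl_self cs ht, hw', phi_apply_word]
    show sgn t (cs.rightInvSeq ω') * (-1) = -1
    rw [hsgn, one_mul]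
  · intro hsgn
    obtain ⟨ω, hω, rfl⟩ := cs.exists_reduced_word' w
    rw [phi_apply_word] at hsgn
    simp only [mul_one] at hsgn
    have : t ∈ cs.rightInvSeq ω := by
      apply mem_of_sgn_ne_one
      rw [hsgn]; decide
    exact cs.isRightInversion_of_mem_rightInvSeq hω this

end Rep

/-! ### Exchange properties -/

section Exchange

variable {n : ℕ} (cs : CoxeterSystem (CoxeterMatrix.Aₙ n) W)

theorem rightExchange {w t : W} (ht : cs.IsReflection t)
    (hlt : cs.length (w * t) < cs.length w) {ω : List (Fin n)} (hω : cs.IsReduced ω)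
    (hw : w = cs.wordProd ω) : t ∈ cs.rightInvSeq ω := by
  have hinv : cs.IsRightInversion w t := ⟨ht, hlt⟩
  have hsgn : (phi cs w (t, 1)).2 = -1 := (isRightInversion_iff_sign cs ht).mp hinv
  rw [hw, phi_apply_word] at hsgn
  simp only [mul_one] at hsgn
  apply mem_of_sgn_ne_one
  rw [hsgn]
  decide

theorem leftExchange {w t : W} (ht : cs.IsReflection t)
    (hlt : cs.length (t * w) < cs.length w) {ω : List (Fin n)} (hω : cs.IsReduced ω)
    (hw : w = cs.wordProd ω) : t ∈ cs.leftInvSeq ω := by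
  have h1 : cs.length (w⁻¹ * t) < cs.length w⁻¹ := by
    have : w⁻¹ * t = (t * w)⁻¹ := by rw [mul_inv_rev, ht.inv]
    rw [this, cs.length_inv, cs.length_inv]
    exact hlt
  have h2 : cs.IsReduced ω.reverse := (cs.isReduced_reverse_iff ω).mpr hω
  have h3 : w⁻¹ = cs.wordProd ω.reverse := by rw [cs.wordProd_reverse, ← hw]
  have h4 := rightExchange cs ht h1 h2 h3
  rw [cs.rightInvSeq_reverse] at h4
  exact List.mem_reverse.mp h4

theorem leftExchange' {w t : W} (ht : cs.IsReflection t)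
    (hlt : cs.length (t * w) < cs.length w) {ω : List (Fin n)} (hω : cs.IsReduced ω)
    (hw : w = cs.wordProd ω) :
    ∃ j < ω.length, t * w = cs.wordProd (ω.eraseIdx j) := by
  have h1 := leftExchange cs ht hlt hω hw
  obtain ⟨j, hj, hjt⟩ := List.mem_iff_getElem.mp h1
  rw [cs.length_leftInvSeq] at hj
  refine ⟨j, hj, ?_⟩
  have h2 := cs.getD_leftInvSeq_mul_wordProd ω j
  rw [List.getD_eq_getElem _ 1 (by rw [cs.length_leftInvSeq]; exact hj), hjt] at h2
  rw [hw, h2]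

end Exchange

/-! ### Bruhat order: basic facts and lifting -/

section Bruhat

variable {n : ℕ} (cs : CoxeterSystem (CoxeterMatrix.Aₙ n) W)

theorem bruhatLE_step {a t : W} (ht : cs.IsReflection t)
    (hl : cs.length a < cs.length (t * a)) : BruhatLE cs a (t * a) :=
  Relation.ReflTransGen.single ⟨t, ht, rfl, hl⟩

theorem bruhatLE_smul_of_descent {w : W} {i : Fin n}
    (h : cs.length (cs.simple i * w) < cs.length w) : BruhatLE cs (cs.simple i * w) w := by
  have h1 : w = cs.simple i * (cs.simple i * w) := by
    rw [cs.simple_mul_simple_cancel_left]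
  exact Relation.ReflTransGen.single ⟨cs.simple i, cs.isReflection_simple i, h1, h⟩

theorem bruhatLE_smul_of_ascent {w : W} {i : Fin n}
    (h : cs.length w < cs.length (cs.simple i * w)) : BruhatLE cs w (cs.simple i * w) :=
  Relation.ReflTransGen.single ⟨cs.simple i, cs.isReflection_simple i, rfl, h⟩

theorem length_smul_eq_add_one {w : W} {i : Fin n}
    (h : cs.length w < cs.length (cs.simple i * w)) :
    cs.length (cs.simple i * w) = cs.length w + 1 := by
  rcases cs.length_simple_mul w i with h1 | h1 <;> omega

theorem length_smul_eq_sub_one {w : W} {i : Fin n}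
    (h : cs.length (cs.simple i * w) < cs.length w) :
    cs.length (cs.simple i * w) + 1 = cs.length w := by
  rcases cs.length_simple_mul w i with h1 | h1 <;> omega

theorem liftStep {i : Fin n} {y z t : W} (ht : cs.IsReflection t) (hz : z = t * y)
    (hyz : cs.length y < cs.length z) (hy : cs.length y < cs.length (cs.simple i * y))
    (hsz : cs.length (cs.simple i * z) < cs.length z) :
    BruhatLE cs (cs.simple i * y) z := by
  have hsts : cs.IsReflection (cs.simple i * t * (cs.simple i)⁻¹) := ht.conj (cs.simple i)
  have key : cs.simple i * z = (cs.simple i * t * (cs.simple i)⁻¹) * (cs.simple i * y) := by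
    rw [hz]; group
  rcases lt_trichotomy (cs.length (cs.simple i * y)) (cs.length (cs.simple i * z)) with h | h | h
  · have h1 : BruhatLE cs (cs.simple i * y) (cs.simple i * z) :=
      Relation.ReflTransGen.single ⟨_, hsts, key, h⟩
    exact h1.trans (bruhatLE_smul_of_descent cs hsz)
  · exfalso
    have := hsts.length_mul_right_ne (cs.simple i * y)
    rw [← key] at this
    exact this h.symm
  · -- ℓ(sz) < ℓ(sy) : show s y = z
    have hy1 : cs.length (cs.simple i * y) = cs.length y + 1 := length_smul_eq_add_one cs hy
    have hz1 : cs.length (cs.simple i * z) + 1 = cs.length z := length_smul_eq_sub_one cs hsz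
    have hzy : cs.length z = cs.length y + 1 := by omega
    obtain ⟨ω', hω', hw'⟩ := cs.exists_reduced_word' (cs.simple i * z)
    have hπ : z = cs.wordProd (i :: ω') := by
      rw [cs.wordProd_cons, ← hw', cs.simple_mul_simple_cancel_left]
    have hred : cs.IsReduced (i :: ω') := by
      show cs.length (cs.wordProd (i :: ω')) = (i :: ω').length
      rw [← hπ, List.length_cons]
      have : cs.length (cs.simple i * z) = ω'.length := by rw [hw']; exact hω'
      omega
    have htz : cs.length (t * z) < cs.length z := by
      have : t * z = y := by rw [hz, ← mul_assoc, ht.mul_self, one_mul]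
      rw [this]; exact hyz
    obtain ⟨j, hj, hjeq⟩ := leftExchange' cs ht htz hred hπ
    have hty : t * z = y := by rw [hz, ← mul_assoc, ht.mul_self, one_mul]
    match j, hj with
    | 0, _ =>
      have : y = cs.simple i * z := by
        rw [← hty, hjeq]
        show cs.wordProd ((i :: ω').eraseIdx 0) = cs.simple i * z
        rw [List.eraseIdx_cons_zero, ← hw']
      rw [this, cs.simple_mul_simple_cancel_left]
      exact Relation.ReflTransGen.refl
    | (j+1), hj =>
      exfalso
      have hjl : j < ω'.length := by simpa using hj
      have : y = cs.wordProd (i :: ω'.eraseIdx j) := by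
        rw [← hty, hjeq, List.eraseIdx_cons_succ]
      have hsy : cs.simple i * y = cs.wordProd (ω'.eraseIdx j) := by
        rw [this, cs.wordProd_cons, cs.simple_mul_simple_cancel_left]
      have hle : cs.length (cs.simple i * y) ≤ (ω'.eraseIdx j).length := by
        rw [hsy]; exact cs.length_wordProd_le _
      have hlen : (ω'.eraseIdx j).length + 1 = ω'.length :=
        List.length_eraseIdx_add_one hjl
      have hω'l : ω'.length = cs.length (cs.simple i * z) := by rw [hw']; exact hω'.symm
      omega

theorem liftZ (N : ℕ) : ∀ (i : Fin n) (v z : W), BruhatLE cs v z → cs.length z ≤ N →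
    cs.length v < cs.length (cs.simple i * v) →
    ((cs.length z < cs.length (cs.simple i * z) →
        BruhatLE cs (cs.simple i * v) (cs.simple i * z))
      ∧ (cs.length (cs.simple i * z) < cs.length z → BruhatLE cs (cs.simple i * v) z)) := by
  induction N using Nat.strong_induction_on with
  | _ N IH =>
    intro i v z hvz hzN hv
    rcases Relation.ReflTransGen.cases_tail hvz with rfl | ⟨y, hvy, hstep⟩
    · constructor
      · intro hz
        exact Relation.ReflTransGen.refl
      · intro hz
        omega
    · obtain ⟨t, ht, hzty, hyz⟩ := hstep
      have hyN : cs.length y < N := by omega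
      have IH' := IH (cs.length y) hyN i v y hvy le_rfl hv
      constructor
      · intro hz
        rcases Nat.lt_or_ge (cs.length y) (cs.length (cs.simple i * y)) with hy | hy
        · -- ascent at y
          have h1 : BruhatLE cs (cs.simple i * v) (cs.simple i * y) := IH'.1 hy
          have key : cs.simple i * z = (cs.simple i * t * (cs.simple i)⁻¹) * (cs.simple i * y) := by
            rw [hzty]; group
          have hlt : cs.length (cs.simple i * y) < cs.length (cs.simple i * z) := by
            have e1 := length_smul_eq_add_one cs hy
            have e2 := length_smul_eq_add_one cs hz
            omega
          have h2 : BruhatLE cs (cs.simple i * y) (cs.simple i * z) :=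
            Relation.ReflTransGen.single ⟨_, ht.conj (cs.simple i), key, hlt⟩
          exact h1.trans h2
        · -- descent at y
          have hy' : cs.length (cs.simple i * y) < cs.length y :=
            lt_of_le_of_ne hy (cs.length_simple_mul_ne y i)
          have h1 : BruhatLE cs (cs.simple i * v) y := IH'.2 hy'
          have h2 : BruhatLE cs y z := Relation.ReflTransGen.single ⟨t, ht, hzty, hyz⟩
          have h3 : BruhatLE cs z (cs.simple i * z) := bruhatLE_smul_of_ascent cs hz
          exact (h1.trans h2).trans h3
      · intro hz
        rcases Nat.lt_or_ge (cs.length y) (cs.length (cs.simple i * y)) with hy | hy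
        · -- ascent at y: use liftStep
          have h1 : BruhatLE cs (cs.simple i * v) (cs.simple i * y) := IH'.1 hy
          have h2 : BruhatLE cs (cs.simple i * y) z := liftStep cs ht hzty hyz hy hz
          exact h1.trans h2
        · -- descent at y
          have hy' : cs.length (cs.simple i * y) < cs.length y :=
            lt_of_le_of_ne hy (cs.length_simple_mul_ne y i)
          have h1 : BruhatLE cs (cs.simple i * v) y := IH'.2 hy'
          have h2 : BruhatLE cs y z := Relation.ReflTransGen.single ⟨t, ht, hzty, hyz⟩
          exact h1.trans h2

theorem Z1 {i : Fin n} {v z : W} (hvz : BruhatLE cs v z)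
    (hv : cs.length v < cs.length (cs.simple i * v))
    (hz : cs.length z < cs.length (cs.simple i * z)) :
    BruhatLE cs (cs.simple i * v) (cs.simple i * z) :=
  (liftZ cs (cs.length z) i v z hvz le_rfl hv).1 hz

theorem Z2 {i : Fin n} {v z : W} (hvz : BruhatLE cs v z)
    (hv : cs.length v < cs.length (cs.simple i * v))
    (hz : cs.length (cs.simple i * z) < cs.length z) :
    BruhatLE cs (cs.simple i * v) z :=
  (liftZ cs (cs.length z) i v z hvz le_rfl hv).2 hz

end Bruhat

/-! ### Deletion, subword property, further lifting properties -/

section Subword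

variable {n : ℕ} (cs : CoxeterSystem (CoxeterMatrix.Aₙ n) W)

theorem deletion_aux (N : ℕ) : ∀ ω : List (Fin n), ω.length ≤ N →
    ∃ μ : List (Fin n), μ.Sublist ω ∧ cs.IsReduced μ ∧ cs.wordProd μ = cs.wordProd ω := by
  induction N with
  | zero =>
    intro ω hlen
    have : ω = [] := List.length_eq_zero_iff.mp (Nat.le_zero.mp hlen)
    subst this
    exact ⟨[], List.Sublist.refl _, by simp [CoxeterSystem.IsReduced], rfl⟩
  | succ N IH =>
    intro ω hlen
    by_cases hred : cs.IsReduced ω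
    · exact ⟨ω, List.Sublist.refl _, hred, rfl⟩
    · cases ω with
      | nil => exact absurd (by simp [CoxeterSystem.IsReduced]) hred
      | cons i ω₂ =>
        have hlen2 : ω₂.length ≤ N := by simpa using hlen
        obtain ⟨μ₂, hsub₂, hred₂, hprod₂⟩ := IH ω₂ hlen2
        by_cases hred3 : cs.IsReduced (i :: μ₂)
        · refine ⟨i :: μ₂, List.Sublist.cons₂ i hsub₂, hred3, ?_⟩
          rw [cs.wordProd_cons, cs.wordProd_cons, hprod₂]
        · have hlt : cs.length (cs.simple i * cs.wordProd μ₂) < cs.length (cs.wordProd μ₂) := by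
            have h1 : cs.length (cs.wordProd μ₂) = μ₂.length := hred₂
            have h2 : cs.length (cs.wordProd (i :: μ₂)) ≠ (i :: μ₂).length := hred3
            rw [cs.wordProd_cons] at h2
            rcases cs.length_simple_mul (cs.wordProd μ₂) i with h3 | h3
            · exact absurd (by rw [h3, h1]; simp) h2
            · omega
          obtain ⟨j, hj, hjeq⟩ :=
            leftExchange' cs (cs.isReflection_simple i) hlt hred₂ rfl
          have hprod4 : cs.wordProd (μ₂.eraseIdx j) = cs.wordProd (i :: ω₂) := by
            rw [← hjeq, cs.wordProd_cons, hprod₂]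
          have hlen4 : (μ₂.eraseIdx j).length ≤ N :=
            le_trans (le_trans (List.length_eraseIdx_le _ _) (List.Sublist.length_le hsub₂))
              hlen2
          obtain ⟨μ₃, hsub₃, hred₃, hprod₃⟩ := IH (μ₂.eraseIdx j) hlen4
          refine ⟨μ₃, ?_, hred₃, by rw [hprod₃, hprod4]⟩
          exact (hsub₃.trans (List.eraseIdx_sublist μ₂ j)).trans
            (hsub₂.trans (List.sublist_cons_self i ω₂))

theorem deletion (ω : List (Fin n)) :
    ∃ μ : List (Fin n), μ.Sublist ω ∧ cs.IsReduced μ ∧ cs.wordProd μ = cs.wordProd ω :=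
  deletion_aux cs ω.length ω le_rfl

theorem subwordA {u w : W} (h : BruhatLE cs u w) :
    ∀ ω : List (Fin n), cs.IsReduced ω → w = cs.wordProd ω →
      ∃ μ : List (Fin n), μ.Sublist ω ∧ cs.IsReduced μ ∧ u = cs.wordProd μ := by
  induction h with
  | refl =>
    intro ω hred hw
    exact ⟨ω, List.Sublist.refl _, hred, hw⟩
  | @tail z w' hchain hlast ih =>
    intro ω hred hw
    obtain ⟨t, ht, hw', hlt⟩ := hlast
    have htw : t * w' = z := by rw [hw', ← mul_assoc, ht.mul_self, one_mul]
    have hltw : cs.length (t * w') < cs.length w' := by rw [htw]; exact hlt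
    obtain ⟨j, hj, hjeq⟩ := leftExchange' cs ht hltw hred hw
    have hz : z = cs.wordProd (ω.eraseIdx j) := by rw [← htw]; exact hjeq
    obtain ⟨ν, hsubν, hredν, hprodν⟩ := deletion cs (ω.eraseIdx j)
    obtain ⟨μ, hsubμ, hredμ, hprodμ⟩ := ih ν hredν (by rw [hprodν, ← hz])
    exact ⟨μ, (hsubμ.trans hsubν).trans (List.eraseIdx_sublist ω j), hredμ, hprodμ⟩

theorem subwordB : ∀ {μ ω : List (Fin n)}, μ.Sublist ω → cs.IsReduced ω →
    BruhatLE cs (cs.wordProd μ) (cs.wordProd ω) := by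
  intro μ ω hsub
  induction hsub with
  | slnil => intro _; exact Relation.ReflTransGen.refl
  | @cons μ' ω' i hsub ih =>
    intro hred
    have hred' : cs.IsReduced ω' := by
      have := CoxeterSystem.IsReduced.drop (ω := i :: ω') hred (j := 1)
      simpa using this
    have h1 := ih hred'
    have h2 : cs.length (cs.wordProd ω') < cs.length (cs.simple i * cs.wordProd ω') := by
      have h3 : cs.length (cs.wordProd (i :: ω')) = ω'.length + 1 := by
        rw [hred]; simp
      rw [cs.wordProd_cons] at h3
      have h4 : cs.length (cs.wordProd ω') ≤ ω'.length := cs.length_wordProd_le ω'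
      omega
    have h3 : BruhatLE cs (cs.wordProd ω') (cs.wordProd (i :: ω')) := by
      rw [cs.wordProd_cons]
      exact bruhatLE_smul_of_ascent cs h2
    exact h1.trans h3
  | @cons_cons μ' ω' i hsub ih =>
    intro hred
    have hred' : cs.IsReduced ω' := by
      have := CoxeterSystem.IsReduced.drop (ω := i :: ω') hred (j := 1)
      simpa using this
    have h1 := ih hred'
    have h2 : cs.length (cs.wordProd ω') < cs.length (cs.simple i * cs.wordProd ω') := by
      have h3 : cs.length (cs.wordProd (i :: ω')) = ω'.length + 1 := by
        rw [hred]; simp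
      rw [cs.wordProd_cons] at h3
      have h4 : cs.length (cs.wordProd ω') ≤ ω'.length := cs.length_wordProd_le ω'
      omega
    rw [cs.wordProd_cons, cs.wordProd_cons]
    rcases Nat.lt_or_ge (cs.length (cs.wordProd μ'))
        (cs.length (cs.simple i * cs.wordProd μ')) with hy | hy
    · exact Z1 cs h1 hy h2
    · have hy' : cs.length (cs.simple i * cs.wordProd μ') < cs.length (cs.wordProd μ') :=
        lt_of_le_of_ne hy (cs.length_simple_mul_ne _ i)
      have hA : BruhatLE cs (cs.simple i * cs.wordProd μ') (cs.wordProd μ') :=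
        bruhatLE_smul_of_descent cs hy'
      have hB : BruhatLE cs (cs.wordProd ω') (cs.simple i * cs.wordProd ω') :=
        bruhatLE_smul_of_ascent cs h2
      exact (hA.trans h1).trans hB

theorem Z3 {i : Fin n} {u w : W} (huw : BruhatLE cs u w)
    (hu : cs.length (cs.simple i * u) < cs.length u)
    (hw : cs.length (cs.simple i * w) < cs.length w) :
    BruhatLE cs (cs.simple i * u) (cs.simple i * w) := by
  obtain ⟨ω', hω', hw'⟩ := cs.exists_reduced_word' (cs.simple i * w)
  have hπ : w = cs.wordProd (i :: ω') := by
    rw [cs.wordProd_cons, ← hw', cs.simple_mul_simple_cancel_left]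
  have hred : cs.IsReduced (i :: ω') := by
    show cs.length (cs.wordProd (i :: ω')) = (i :: ω').length
    rw [← hπ, List.length_cons]
    have h1 : cs.length (cs.simple i * w) = ω'.length := by rw [hw']; exact hω'
    have h2 := length_smul_eq_sub_one cs hw
    omega
  obtain ⟨μ, hsubμ, hredμ, hprodμ⟩ := subwordA cs huw (i :: ω') hred hπ
  cases hsubμ with
  | cons _ hsub =>
    have h1 : BruhatLE cs u (cs.simple i * w) := by
      rw [hw', hprodμ]
      exact subwordB cs hsub hω'
    exact (bruhatLE_smul_of_descent cs hu).trans h1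
  | cons_cons _ hsub =>
    rename_i μ''
    have hμred : cs.IsReduced μ'' := by
      have := CoxeterSystem.IsReduced.drop (ω := i :: μ'') hredμ (j := 1)
      simpa using this
    have hsu : cs.simple i * u = cs.wordProd μ'' := by
      rw [hprodμ, cs.wordProd_cons, cs.simple_mul_simple_cancel_left]
    rw [hsu, hw']
    exact subwordB cs hsub hω'

theorem Z4 {i : Fin n} {u w : W} (huw : BruhatLE cs u w)
    (hu : cs.length u < cs.length (cs.simple i * u))
    (hw : cs.length (cs.simple i * w) < cs.length w) :
    BruhatLE cs u (cs.simple i * w) := by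
  obtain ⟨ω', hω', hw'⟩ := cs.exists_reduced_word' (cs.simple i * w)
  have hπ : w = cs.wordProd (i :: ω') := by
    rw [cs.wordProd_cons, ← hw', cs.simple_mul_simple_cancel_left]
  have hred : cs.IsReduced (i :: ω') := by
    show cs.length (cs.wordProd (i :: ω')) = (i :: ω').length
    rw [← hπ, List.length_cons]
    have h1 : cs.length (cs.simple i * w) = ω'.length := by rw [hw']; exact hω'
    have h2 := length_smul_eq_sub_one cs hw
    omega
  obtain ⟨μ, hsubμ, hredμ, hprodμ⟩ := subwordA cs huw (i :: ω') hred hπ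
  cases hsubμ with
  | cons _ hsub =>
    rw [hw', hprodμ]
    exact subwordB cs hsub hω'
  | cons_cons _ hsub =>
    rename_i μ''
    exfalso
    have hsu : cs.simple i * u = cs.wordProd μ'' := by
      rw [hprodμ, cs.wordProd_cons, cs.simple_mul_simple_cancel_left]
    have h1 : cs.length (cs.simple i * u) ≤ μ''.length := by
      rw [hsu]; exact cs.length_wordProd_le μ''
    have h2 : cs.length u = μ''.length + 1 := by
      rw [hprodμ,
        show cs.length (cs.wordProd (i :: μ'')) = (i :: μ'').length from hredμ]
      simp
    omega

end Subword

/-! ### Covers and lengths -/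

section Cover

variable {n : ℕ} (cs : CoxeterSystem (CoxeterMatrix.Aₙ n) W)

theorem eq_of_bruhatLE_of_length_le {a b : W} (h : BruhatLE cs a b)
    (hl : cs.length b ≤ cs.length a) : a = b := by
  by_contra hne
  have := BruhatLE.length_lt h hne
  omega

theorem cover_length_aux (N : ℕ) : ∀ x y : W, cs.length y ≤ N → BruhatLE cs x y → x ≠ y →
    (∀ m : W, BruhatLE cs x m → x ≠ m → BruhatLE cs m y → m ≠ y → False) →
    cs.length y = cs.length x + 1 := by
  induction N with
  | zero =>
    intro x y hN hxy hne _
    exfalso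
    have := BruhatLE.length_lt hxy hne
    omega
  | succ N IH =>
    intro x y hN hxy hne hcov
    have hlx : cs.length x < cs.length y := BruhatLE.length_lt hxy hne
    have hy1 : y ≠ 1 := by
      intro h; rw [h, cs.length_one] at hlx; omega
    obtain ⟨i, hi⟩ := cs.exists_leftDescent_of_ne_one hy1
    have hdesc : cs.length (cs.simple i * y) < cs.length y := hi
    have hsy_le : BruhatLE cs (cs.simple i * y) y := bruhatLE_smul_of_descent cs hdesc
    have hsy_ne : cs.simple i * y ≠ y := by
      intro h; rw [h] at hdesc; omega
    have hsylen : cs.length (cs.simple i * y) + 1 = cs.length y := length_smul_eq_sub_one cs hdesc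
    by_cases hxsy : BruhatLE cs x (cs.simple i * y)
    · by_cases hxeq : x = cs.simple i * y
      · rw [hxeq]; omega
      · exact (hcov _ hxsy hxeq hsy_le hsy_ne).elim
    · have hsx : cs.length (cs.simple i * x) < cs.length x := by
        by_contra hc
        push_neg at hc
        have hasc : cs.length x < cs.length (cs.simple i * x) :=
          lt_of_le_of_ne hc (Ne.symm (cs.length_simple_mul_ne x i))
        exact hxsy (Z4 cs hxy hasc hdesc)
      have h3 : BruhatLE cs (cs.simple i * x) (cs.simple i * y) := Z3 cs hxy hsx hdesc
      have hne3 : cs.simple i * x ≠ cs.simple i * y := by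
        intro h
        apply hne
        have := congrArg (fun z => cs.simple i * z) h
        simpa [cs.simple_mul_simple_cancel_left] using this
      have hsxlen : cs.length (cs.simple i * x) + 1 = cs.length x :=
        length_smul_eq_sub_one cs hsx
      have hcov3 : ∀ m : W, BruhatLE cs (cs.simple i * x) m → cs.simple i * x ≠ m →
          BruhatLE cs m (cs.simple i * y) → m ≠ cs.simple i * y → False := by
        intro m hm1 hm2 hm3 hm4
        rcases Nat.lt_or_ge (cs.length m) (cs.length (cs.simple i * m)) with hm | hm
        · have hxm : BruhatLE cs x (cs.simple i * m) := by
            have := Z1 cs hm1 (by rw [cs.simple_mul_simple_cancel_left]; exact hsx) hm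
            rwa [cs.simple_mul_simple_cancel_left] at this
          have hmy : BruhatLE cs (cs.simple i * m) y := by
            have := Z1 cs hm3 hm
              (by rw [cs.simple_mul_simple_cancel_left]; exact hdesc)
            rwa [cs.simple_mul_simple_cancel_left] at this
          refine hcov _ hxm ?_ hmy ?_
          · intro h
            apply hm2
            rw [h, cs.simple_mul_simple_cancel_left]
          · intro h
            apply hm4
            rw [← h, cs.simple_mul_simple_cancel_left]
        · have hm' : cs.length (cs.simple i * m) < cs.length m :=
            lt_of_le_of_ne hm (cs.length_simple_mul_ne m i)
          have hxm : BruhatLE cs x m := by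
            have := Z2 cs hm1 (by rw [cs.simple_mul_simple_cancel_left]; exact hsx) hm'
            rwa [cs.simple_mul_simple_cancel_left] at this
          have hmy : BruhatLE cs m y := hm3.trans hsy_le
          refine hcov m hxm ?_ hmy ?_
          · intro h
            exact hxsy (h ▸ hm3)
          · intro h
            have h1 := BruhatLE.length_le hm3
            rw [h] at h1
            omega
      have := IH (cs.simple i * x) (cs.simple i * y) (by omega) h3 hne3 hcov3
      omega

theorem cover_length {x y : W} (hxy : BruhatLE cs x y) (hne : x ≠ y)
    (hcov : ∀ m : W, BruhatLE cs x m → x ≠ m → BruhatLE cs m y → m ≠ y → False) :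
    cs.length y = cs.length x + 1 :=
  cover_length_aux cs (cs.length y) x y le_rfl hxy hne hcov

end Cover

/-! ### Interval helpers and the special matching in the descent case -/

section Matching

variable {n : ℕ} (cs : CoxeterSystem (CoxeterMatrix.Aₙ n) W)

theorem BI_le_iff {u w : W} {x y : BruhatInterval cs u w} :
    x ≤ y ↔ BruhatLE cs x.1 y.1 := Iff.rfl

theorem BI_lt_iff {u w : W} {x y : BruhatInterval cs u w} :
    x < y ↔ BruhatLE cs x.1 y.1 ∧ x.1 ≠ y.1 := by
  rw [lt_iff_le_and_ne]
  constructor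
  · rintro ⟨h1, h2⟩; exact ⟨h1, fun h => h2 (Subtype.ext h)⟩
  · rintro ⟨h1, h2⟩; exact ⟨h1, fun h => h2 (congrArg Subtype.val h)⟩

theorem specialMatching_transport {α β : Type*} [PartialOrder α] [PartialOrder β]
    (g : α ≃o β) {f : β → β} (hf : IsSpecialMatching f) :
    IsSpecialMatching (fun x => g.symm (f (g x))) := by
  obtain ⟨⟨hinv, hcov⟩, hspec⟩ := hf
  refine ⟨⟨?_, ?_⟩, ?_⟩
  · intro x
    simp only [OrderIso.apply_symm_apply]
    rw [hinv (g x)]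
    exact g.symm_apply_apply x
  · intro x
    rcases hcov (g x) with h | h
    · left
      have : g.symm (f (g x)) ⋖ g.symm (g x) := (apply_covBy_apply_iff g.symm).mpr h
      rwa [g.symm_apply_apply] at this
    · right
      have : g.symm (g x) ⋖ g.symm (f (g x)) := (apply_covBy_apply_iff g.symm).mpr h
      rwa [g.symm_apply_apply] at this
  · intro x y hxy
    have hgxy : g x ⋖ g y := (apply_covBy_apply_iff g).mpr hxy
    rcases hspec (g x) (g y) hgxy with h | h
    · left
      show g.symm (f (g x)) = y
      rw [h]
      exact g.symm_apply_apply y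
    · right
      exact (OrderIso.lt_iff_lt g.symm).mpr h

theorem matchingA {u w : W} {i : Fin n} (huw : BruhatLE cs u w)
    (hsu : cs.length u < cs.length (cs.simple i * u))
    (hsw : cs.length (cs.simple i * w) < cs.length w) :
    ∃ f : BruhatInterval cs u w → BruhatInterval cs u w, IsSpecialMatching f := by
  have mem : ∀ x : W, BruhatLE cs u x → BruhatLE cs x w →
      BruhatLE cs u (cs.simple i * x) ∧ BruhatLE cs (cs.simple i * x) w := by
    intro x hux hxw
    rcases Nat.lt_or_ge (cs.length x) (cs.length (cs.simple i * x)) with hx | hx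
    · exact ⟨hux.trans (bruhatLE_smul_of_ascent cs hx), Z2 cs hxw hx hsw⟩
    · have hx' : cs.length (cs.simple i * x) < cs.length x :=
        lt_of_le_of_ne hx (cs.length_simple_mul_ne x i)
      exact ⟨Z4 cs hux hsu hx', (bruhatLE_smul_of_descent cs hx').trans hxw⟩
  refine ⟨fun x => ⟨cs.simple i * x.1, mem x.1 x.2.1 x.2.2⟩, ⟨?_, ?_⟩, ?_⟩
  · intro x
    apply Subtype.ext
    show cs.simple i * (cs.simple i * x.1) = x.1
    rw [cs.simple_mul_simple_cancel_left]
  · intro x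
    rcases Nat.lt_or_ge (cs.length x.1) (cs.length (cs.simple i * x.1)) with hx | hx
    · right
      constructor
      · exact BI_lt_iff cs |>.mpr ⟨bruhatLE_smul_of_ascent cs hx, fun h => by
          have h' : x.1 = cs.simple i * x.1 := h
          rw [← h'] at hx; omega⟩
      · intro z h1 h2
        rw [BI_lt_iff cs] at h1 h2
        have l1 : cs.length x.1 < cs.length z.1 := BruhatLE.length_lt h1.1 h1.2
        have l2 : cs.length z.1 < cs.length (cs.simple i * x.1) :=
          BruhatLE.length_lt h2.1 h2.2
        have := length_smul_eq_add_one cs hx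
        omega
    · have hx' : cs.length (cs.simple i * x.1) < cs.length x.1 :=
        lt_of_le_of_ne hx (cs.length_simple_mul_ne x.1 i)
      left
      constructor
      · exact BI_lt_iff cs |>.mpr ⟨bruhatLE_smul_of_descent cs hx', fun h => by
          have h' : cs.simple i * x.1 = x.1 := h
          rw [h'] at hx'; omega⟩
      · intro z h1 h2
        rw [BI_lt_iff cs] at h1 h2
        have l1 : cs.length (cs.simple i * x.1) < cs.length z.1 :=
          BruhatLE.length_lt h1.1 h1.2
        have l2 : cs.length z.1 < cs.length x.1 := BruhatLE.length_lt h2.1 h2.2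
        have := length_smul_eq_sub_one cs hx'
        omega
  · intro x y hcov
    have hxy := (BI_lt_iff cs).mp hcov.1
    have hWcov : ∀ m : W, BruhatLE cs x.1 m → x.1 ≠ m → BruhatLE cs m y.1 → m ≠ y.1 → False := by
      intro m hm1 hm2 hm3 hm4
      have hmem : BruhatLE cs u m ∧ BruhatLE cs m w := ⟨x.2.1.trans hm1, hm3.trans y.2.2⟩
      have hz1 : x < (⟨m, hmem⟩ : BruhatInterval cs u w) := (BI_lt_iff cs).mpr ⟨hm1, hm2⟩
      have hz2 : (⟨m, hmem⟩ : BruhatInterval cs u w) < y := (BI_lt_iff cs).mpr ⟨hm3, hm4⟩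
      exact hcov.2 hz1 hz2
    have hlen : cs.length y.1 = cs.length x.1 + 1 := cover_length cs hxy.1 hxy.2 hWcov
    rcases Nat.lt_or_ge (cs.length x.1) (cs.length (cs.simple i * x.1)) with hx | hx
    · rcases Nat.lt_or_ge (cs.length y.1) (cs.length (cs.simple i * y.1)) with hy | hy
      · -- both ascents
        right
        refine (BI_lt_iff cs).mpr ⟨Z1 cs hxy.1 hx hy, fun h => hxy.2 ?_⟩
        have := congrArg (fun z => cs.simple i * z) h
        simpa [cs.simple_mul_simple_cancel_left] using this
      · -- ascent at x, descent at y : f x = y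
        have hy' : cs.length (cs.simple i * y.1) < cs.length y.1 :=
          lt_of_le_of_ne hy (cs.length_simple_mul_ne y.1 i)
        left
        apply Subtype.ext
        show cs.simple i * x.1 = y.1
        have h1 : BruhatLE cs x.1 (cs.simple i * y.1) := Z4 cs hxy.1 hx hy'
        have h2 : cs.length (cs.simple i * y.1) + 1 = cs.length y.1 :=
          length_smul_eq_sub_one cs hy'
        have h3 : x.1 = cs.simple i * y.1 :=
          eq_of_bruhatLE_of_length_le cs h1 (by omega)
        rw [h3, cs.simple_mul_simple_cancel_left]
    · have hx' : cs.length (cs.simple i * x.1) < cs.length x.1 :=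
        lt_of_le_of_ne hx (cs.length_simple_mul_ne x.1 i)
      rcases Nat.lt_or_ge (cs.length y.1) (cs.length (cs.simple i * y.1)) with hy | hy
      · -- descent at x, ascent at y
        right
        refine (BI_lt_iff cs).mpr ⟨?_, ?_⟩
        · exact ((bruhatLE_smul_of_descent cs hx').trans hxy.1).trans
            (bruhatLE_smul_of_ascent cs hy)
        · intro h
          apply hxy.2
          have := congrArg (fun z => cs.simple i * z) h
          simpa [cs.simple_mul_simple_cancel_left] using this
      · -- both descents
        have hy' : cs.length (cs.simple i * y.1) < cs.length y.1 :=
          lt_of_le_of_ne hy (cs.length_simple_mul_ne y.1 i)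
        right
        refine (BI_lt_iff cs).mpr ⟨Z3 cs hxy.1 hx' hy', fun h => hxy.2 ?_⟩
        have := congrArg (fun z => cs.simple i * z) h
        simpa [cs.simple_mul_simple_cancel_left] using this

end Matching

/-! ### Finiteness of the set of reflections in type A -/

section Finiteness

variable {n : ℕ} (cs : CoxeterSystem (CoxeterMatrix.Aₙ n) W)

theorem comm_of_sq {x y : W} (hx : x * x = 1) (hy : y * y = 1) (h2 : (x * y)^2 = 1) :
    x * y = y * x := by
  have ix : x⁻¹ = x := inv_eq_of_mul_eq_one_right hx
  have iy : y⁻¹ = y := inv_eq_of_mul_eq_one_right hy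
  have h2' : (x * y) * (x * y) = 1 := by rw [← h2, pow_two]
  have := inv_eq_of_mul_eq_one_right h2'
  rw [mul_inv_rev, ix, iy] at this
  rw [← this]

theorem braid_of_cube {x y : W} (hx : x * x = 1) (hy : y * y = 1) (h3 : (x * y)^3 = 1) :
    x * (y * x) = y * (x * y) := by
  have ix : x⁻¹ = x := inv_eq_of_mul_eq_one_right hx
  have iy : y⁻¹ = y := inv_eq_of_mul_eq_one_right hy
  have h3' : x * (y * (x * (y * (x * y)))) = 1 := by
    rw [← h3, pow_succ, pow_two]; simp only [mul_assoc]
  have k1 : y * (x * (y * (x * y))) = x := by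
    have := inv_eq_of_mul_eq_one_right h3'
    rw [ix] at this; exact this.symm
  have t1 : (y * (x * y)) * (x * y) = x := by
    simp only [mul_assoc]; exact k1
  have t2 := eq_mul_inv_of_mul_eq t1
  rw [mul_inv_rev, ix, iy] at t2
  rw [← t2]

/-- The `a`-th simple reflection, as a function of natural numbers (1 outside range). -/
noncomputable def sn (a : ℕ) : W := if h : a < n then cs.simple ⟨a, h⟩ else 1

theorem sn_mul_self (a : ℕ) : sn cs a * sn cs a = 1 := by
  unfold sn
  split
  · exact cs.simple_mul_simple_self _
  · simp

theorem sn_comm {a b : ℕ} (h : a + 2 ≤ b) : sn cs a * sn cs b = sn cs b * sn cs a := by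
  unfold sn
  split <;> split
  · rename_i ha hb
    refine comm_of_sq (cs.simple_mul_simple_self _) (cs.simple_mul_simple_self _) ?_
    have h2 := cs.simple_mul_simple_pow ⟨a, ha⟩ ⟨b, hb⟩
    have hv : (CoxeterMatrix.Aₙ n) ⟨a, ha⟩ ⟨b, hb⟩ = 2 := by
      show (if _ then 1 else if _ then 3 else 2) = 2
      rw [if_neg, if_neg]
      · intro hc
        rcases hc with hc | hc <;> simp at hc <;> omega
      · intro hc
        have : a = b := by simpa using congrArg (fun x : Fin n => (x : ℕ)) hc
        omega
    rwa [hv] at h2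
  all_goals simp

theorem sn_braid {a : ℕ} (h : a + 1 < n) :
    sn cs a * (sn cs (a+1) * sn cs a) = sn cs (a+1) * (sn cs a * sn cs (a+1)) := by
  have ha : a < n := by omega
  have e1 : sn cs a = cs.simple ⟨a, ha⟩ := by unfold sn; rw [dif_pos ha]
  have e2 : sn cs (a+1) = cs.simple ⟨a+1, h⟩ := by unfold sn; rw [dif_pos h]
  rw [e1, e2]
  refine braid_of_cube (cs.simple_mul_simple_self _) (cs.simple_mul_simple_self _) ?_
  have h3 := cs.simple_mul_simple_pow ⟨a, ha⟩ ⟨a+1, h⟩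
  have hv : (CoxeterMatrix.Aₙ n) ⟨a, ha⟩ ⟨a+1, h⟩ = 3 := by
    show (if _ then 1 else if _ then 3 else 2) = 3
    rw [if_neg, if_pos]
    · right; rfl
    · intro hc
      have : a = a + 1 := by simpa using congrArg (fun x : Fin n => (x : ℕ)) hc
      omega
  rwa [hv] at h3

/-- `tt a k` is the "transposition" `t_{a, a+k+1}`. -/
noncomputable def tt : ℕ → ℕ → W
  | a, 0 => sn cs a
  | a, (k+1) => sn cs a * tt (a+1) k * sn cs a

theorem tt_comm {c : ℕ} : ∀ (k a : ℕ), (c + 2 ≤ a ∨ a + k + 2 ≤ c) →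
    sn cs c * tt cs a k * sn cs c = tt cs a k := by
  intro k
  induction k with
  | zero =>
    intro a h
    show sn cs c * sn cs a * sn cs c = sn cs a
    have hcomm : sn cs c * sn cs a = sn cs a * sn cs c := by
      rcases h with h | h
      · exact sn_comm cs h
      · exact (sn_comm cs (by omega)).symm
    rw [hcomm, mul_assoc, sn_mul_self, mul_one]
  | succ k IH =>
    intro a h
    show sn cs c * (sn cs a * tt cs (a+1) k * sn cs a) * sn cs c = _
    have hcomm : sn cs c * sn cs a = sn cs a * sn cs c := by
      rcases h with h | h
      · exact sn_comm cs h
      · exact (sn_comm cs (by omega)).symm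
    have hIH : sn cs c * tt cs (a+1) k * sn cs c = tt cs (a+1) k := by
      apply IH
      rcases h with h | h
      · left; omega
      · right; omega
    calc sn cs c * (sn cs a * tt cs (a+1) k * sn cs a) * sn cs c
        = (sn cs c * sn cs a) * tt cs (a+1) k * (sn cs a * sn cs c) := by
          simp only [mul_assoc]
      _ = (sn cs a * sn cs c) * tt cs (a+1) k * (sn cs c * sn cs a) := by
          rw [hcomm, ← hcomm]
      _ = sn cs a * (sn cs c * tt cs (a+1) k * sn cs c) * sn cs a := by
          simp only [mul_assoc]
      _ = sn cs a * tt cs (a+1) k * sn cs a := by rw [hIH]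

theorem tt_right : ∀ (k a : ℕ), a + k + 1 < n →
    tt cs a (k+1) = sn cs (a+k+1) * tt cs a k * sn cs (a+k+1) := by
  intro k
  induction k with
  | zero =>
    intro a h
    show sn cs a * sn cs (a+1) * sn cs a = sn cs (a+1) * sn cs a * sn cs (a+1)
    simp only [mul_assoc]
    exact sn_braid cs (by omega : a + 1 < n)
  | succ k IH =>
    intro a h
    show sn cs a * tt cs (a+1) (k+1) * sn cs a = _
    rw [IH (a+1) (by omega)]
    have hcomm : sn cs a * sn cs (a+1+k+1) = sn cs (a+1+k+1) * sn cs a :=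
      sn_comm cs (by omega)
    have e1 : a + 1 + k + 1 = a + (k+1) + 1 := by omega
    rw [e1] at *
    calc sn cs a * (sn cs (a+(k+1)+1) * tt cs (a+1) k * sn cs (a+(k+1)+1)) * sn cs a
        = (sn cs a * sn cs (a+(k+1)+1)) * tt cs (a+1) k * (sn cs (a+(k+1)+1) * sn cs a) := by
          simp only [mul_assoc]
      _ = (sn cs (a+(k+1)+1) * sn cs a) * tt cs (a+1) k * (sn cs a * sn cs (a+(k+1)+1)) := by
          rw [show sn cs a * sn cs (a+(k+1)+1) = sn cs (a+(k+1)+1) * sn cs a from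
            sn_comm cs (by omega), show sn cs (a+(k+1)+1) * sn cs a
              = sn cs a * sn cs (a+(k+1)+1) from (sn_comm cs (by omega)).symm]
      _ = sn cs (a+(k+1)+1) * (sn cs a * tt cs (a+1) k * sn cs a) * sn cs (a+(k+1)+1) := by
          simp only [mul_assoc]
      _ = sn cs (a+(k+1)+1) * tt cs a (k+1) * sn cs (a+(k+1)+1) := rfl

theorem tt_inner : ∀ (k a c : ℕ), a < c → c < a + k → a + k < n →
    sn cs c * tt cs a k * sn cs c = tt cs a k := by
  intro k
  induction k with
  | zero => intro a c h1 h2 _; omega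
  | succ k IH =>
    intro a c h1 h2 hn
    by_cases hc : c = a + 1
    · subst hc
      -- k ≥ 1 here since a + 1 < a + (k+1)
      have hk1 : 1 ≤ k := by omega
      obtain ⟨k', rfl⟩ : ∃ k', k = k' + 1 := ⟨k - 1, by omega⟩
      show sn cs (a+1) * (sn cs a * tt cs (a+1) (k'+1) * sn cs a) * sn cs (a+1) = _
      show sn cs (a+1) * (sn cs a * (sn cs (a+1) * tt cs (a+2) k' * sn cs (a+1)) * sn cs a)
        * sn cs (a+1) = _
      have hbr := sn_braid cs (show a + 1 < n by omega)
      have hTcomm : sn cs a * tt cs (a+2) k' * sn cs a = tt cs (a+2) k' :=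
        tt_comm cs k' (a+2) (Or.inl (by omega))
      calc sn cs (a+1) * (sn cs a * (sn cs (a+1) * tt cs (a+2) k' * sn cs (a+1)) * sn cs a)
            * sn cs (a+1)
          = (sn cs (a+1) * (sn cs a * sn cs (a+1))) * tt cs (a+2) k'
            * (sn cs (a+1) * (sn cs a * sn cs (a+1))) := by simp only [mul_assoc]
        _ = (sn cs a * (sn cs (a+1) * sn cs a)) * tt cs (a+2) k'
            * (sn cs a * (sn cs (a+1) * sn cs a)) := by rw [← sn_braid cs (by omega)]
        _ = sn cs a * (sn cs (a+1) * (sn cs a * tt cs (a+2) k' * sn cs a) * sn cs (a+1))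
            * sn cs a := by simp only [mul_assoc]
        _ = sn cs a * (sn cs (a+1) * tt cs (a+2) k' * sn cs (a+1)) * sn cs a := by rw [hTcomm]
        _ = tt cs a (k'+2) := rfl
    · have hc2 : a + 2 ≤ c := by omega
      show sn cs c * (sn cs a * tt cs (a+1) k * sn cs a) * sn cs c = _
      have hcomm : sn cs c * sn cs a = sn cs a * sn cs c := (sn_comm cs hc2).symm
      have hIH : sn cs c * tt cs (a+1) k * sn cs c = tt cs (a+1) k := by
        rcases Nat.lt_or_ge c (a + 1 + k) with h | h
        · exact IH (a+1) c (by omega) (by omega) (by omega)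
        · -- c = a + k? no: c < a + (k+1) = a+k+1 so c ≤ a+k = a+1+k-... c < a+k+1 and c ≥ a+1+k
          -- then c = a + k, contradiction with h2 : c < a + (k+1)?? c ≥ a+1+k and c < a+k+1: impossible
          omega
      calc sn cs c * (sn cs a * tt cs (a+1) k * sn cs a) * sn cs c
          = (sn cs c * sn cs a) * tt cs (a+1) k * (sn cs a * sn cs c) := by
            simp only [mul_assoc]
        _ = (sn cs a * sn cs c) * tt cs (a+1) k * (sn cs c * sn cs a) := by
            rw [hcomm, ← hcomm]
        _ = sn cs a * (sn cs c * tt cs (a+1) k * sn cs c) * sn cs a := by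
            simp only [mul_assoc]
        _ = sn cs a * tt cs (a+1) k * sn cs a := by rw [hIH]
        _ = tt cs a (k+1) := rfl

theorem tt_zero (a : ℕ) : tt cs a 0 = sn cs a := rfl

theorem tt_succ (a k : ℕ) : tt cs a (k+1) = sn cs a * tt cs (a+1) k * sn cs a := rfl

theorem tt_closure {c : ℕ} (hc : c < n) : ∀ (a k : ℕ), a + k < n →
    ∃ a' k', a' + k' < n ∧ sn cs c * tt cs a k * sn cs c = tt cs a' k' := by
  intro a k hak
  rcases Nat.lt_or_ge (c+1) a with h1 | h1
  · exact ⟨a, k, hak, tt_comm cs k a (Or.inl (by omega))⟩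
  rcases Nat.eq_or_lt_of_le h1 with h2 | h2
  · -- c + 1 = a
    refine ⟨c, k+1, by omega, ?_⟩
    rw [tt_succ, ← h2]
  have hac : a ≤ c := by omega
  rcases Nat.eq_or_lt_of_le hac with h3 | h3
  · -- a = c
    subst h3
    cases k with
    | zero =>
      refine ⟨a, 0, by omega, ?_⟩
      rw [tt_zero, sn_mul_self, one_mul]
    | succ k =>
      refine ⟨a+1, k, by omega, ?_⟩
      rw [tt_succ]
      calc sn cs a * (sn cs a * tt cs (a+1) k * sn cs a) * sn cs a
          = (sn cs a * sn cs a) * tt cs (a+1) k * (sn cs a * sn cs a) := by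
            simp only [mul_assoc]
        _ = tt cs (a+1) k := by rw [sn_mul_self]; simp
  rcases Nat.lt_or_ge c (a+k) with h4 | h4
  · exact ⟨a, k, hak, tt_inner cs k a c h3 h4 hak⟩
  rcases Nat.eq_or_lt_of_le h4 with h5 | h5
  · -- a + k = c, so k ≥ 1
    have hk : 1 ≤ k := by omega
    obtain ⟨k', rfl⟩ : ∃ k', k = k' + 1 := ⟨k - 1, by omega⟩
    refine ⟨a, k', by omega, ?_⟩
    rw [tt_right cs k' a (by omega), show a + k' + 1 = c by omega]
    calc sn cs c * (sn cs c * tt cs a k' * sn cs c) * sn cs c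
        = (sn cs c * sn cs c) * tt cs a k' * (sn cs c * sn cs c) := by
          simp only [mul_assoc]
      _ = tt cs a k' := by rw [sn_mul_self]; simp
  · -- c ≥ a + k + 1
    rcases Nat.eq_or_lt_of_le (show a + k + 1 ≤ c by omega) with h6 | h6
    · -- a + k + 1 = c
      refine ⟨a, k+1, by omega, ?_⟩
      rw [tt_right cs k a (by omega), h6]
    · exact ⟨a, k, hak, tt_comm cs k a (Or.inr (by omega))⟩

theorem refl_mem_tt {t : W} (ht : cs.IsReflection t) :
    ∃ a k, a + k < n ∧ t = tt cs a k := by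
  obtain ⟨v, i, rfl⟩ := ht
  have hP : ∀ v : W, ∀ a k, a + k < n →
      ∃ a' k', a' + k' < n ∧ v * tt cs a k * v⁻¹ = tt cs a' k' := by
    intro v
    induction v using cs.simple_induction_left with
    | one => intro a k h; exact ⟨a, k, h, by simp⟩
    | mul_simple_left v j IH =>
      intro a k h
      obtain ⟨a', k', h', heq⟩ := IH a k h
      have hsj : cs.simple j = sn cs (j : ℕ) := by
        unfold sn
        rw [dif_pos j.isLt]
      obtain ⟨a'', k'', h'', heq2⟩ := tt_closure cs (j.isLt) a' k' h'
      refine ⟨a'', k'', h'', ?_⟩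
      rw [mul_inv_rev, cs.inv_simple]
      calc cs.simple j * v * tt cs a k * (v⁻¹ * cs.simple j)
          = cs.simple j * (v * tt cs a k * v⁻¹) * cs.simple j := by
            simp only [mul_assoc]
        _ = cs.simple j * tt cs a' k' * cs.simple j := by rw [heq]
        _ = sn cs (j:ℕ) * tt cs a' k' * sn cs (j:ℕ) := by rw [hsj]
        _ = tt cs a'' k'' := heq2
  have hsi : cs.simple i = tt cs (i : ℕ) 0 := by
    show cs.simple i = sn cs (i : ℕ)
    unfold sn
    rw [dif_pos i.isLt]
  obtain ⟨a', k', h', heq⟩ := hP v (i : ℕ) 0 (by simpa using i.isLt)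
  refine ⟨a', k', h', ?_⟩
  rw [← heq, hsi]

open Classical in
theorem length_le_bound (w : W) : cs.length w ≤ n * n := by
  obtain ⟨ω, hred, rfl⟩ := cs.exists_reduced_word' w
  have hnodup : (cs.leftInvSeq ω).Nodup := hred.nodup_leftInvSeq
  have hcard : (cs.leftInvSeq ω).toFinset.card = ω.length := by
    rw [List.toFinset_card_of_nodup hnodup, cs.length_leftInvSeq]
  have hsubset : (cs.leftInvSeq ω).toFinset ⊆
      ((Finset.range n) ×ˢ (Finset.range n)).image (fun p : ℕ × ℕ => tt cs p.1 p.2) := by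
    intro x hx
    rw [List.mem_toFinset] at hx
    have hrefl : cs.IsReflection x := cs.isReflection_of_mem_leftInvSeq ω hx
    obtain ⟨a, k, hak, rfl⟩ := refl_mem_tt cs hrefl
    refine Finset.mem_image.mpr ⟨(a, k), ?_, rfl⟩
    rw [Finset.mem_product, Finset.mem_range, Finset.mem_range]
    omega
  have h1 : ω.length ≤ (((Finset.range n) ×ˢ (Finset.range n)).image
      (fun p : ℕ × ℕ => tt cs p.1 p.2)).card := by
    rw [← hcard]
    exact Finset.card_le_card hsubset
  have h2 : (((Finset.range n) ×ˢ (Finset.range n)).image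
      (fun p : ℕ × ℕ => tt cs p.1 p.2)).card ≤ n * n := by
    refine le_trans (Finset.card_image_le) ?_
    rw [Finset.card_product, Finset.card_range]
  have h3 : cs.length (cs.wordProd ω) = ω.length := hred
  omega

end Finiteness

/-! ### Main theorem -/

section Main

variable {n : ℕ} (cs : CoxeterSystem (CoxeterMatrix.Aₙ n) W)

theorem ascent_of_not_descent {u : W} {i : Fin n} (hnd : ¬ cs.IsLeftDescent u i) :
    cs.length u < cs.length (cs.simple i * u) := by
  rcases Nat.lt_or_ge (cs.length u) (cs.length (cs.simple i * u)) with h | h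
  · exact h
  · exact absurd (lt_of_le_of_ne h (cs.length_simple_mul_ne u i)) hnd

theorem main_aux
    (H : ∀ u w : W, BruhatLE cs u w → u ≠ w →
      bruhatDeg cs u w u = cs.length w - cs.length u →
      ∃ i : Fin n, ¬ cs.IsLeftDescent u i ∧
        (¬ BruhatLE cs (cs.simple i * u) w ∨
          (BruhatLE cs (cs.simple i * w) w ∧ cs.simple i * w ≠ w))) :
    ∀ (m : ℕ) (u w : W), n * n - cs.length w ≤ m → BruhatLE cs u w → u ≠ w →
      bruhatDeg cs u w u = cs.length w - cs.length u →
      ∃ f : BruhatInterval cs u w → BruhatInterval cs u w, IsSpecialMatching f := by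
  intro m
  induction m with
  | zero =>
    intro u w hm hle hne hdeg
    obtain ⟨i, hnd, hcase⟩ := H u w hle hne hdeg
    have hsu : cs.length u < cs.length (cs.simple i * u) := ascent_of_not_descent cs hnd
    rcases hcase with hnle | ⟨hsw_le, hsw_ne⟩
    · exfalso
      have hsw : cs.length w < cs.length (cs.simple i * w) := by
        rcases Nat.lt_or_ge (cs.length w) (cs.length (cs.simple i * w)) with h | h
        · exact h
        · exact absurd (Z2 cs hle hsu (lt_of_le_of_ne h (cs.length_simple_mul_ne w i))) hnle
      have h1 := length_le_bound cs (cs.simple i * w)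
      have h2 := length_smul_eq_add_one cs hsw
      omega
    · exact matchingA cs hle hsu (BruhatLE.length_lt hsw_le hsw_ne)
  | succ m IH =>
    intro u w hm hle hne hdeg
    obtain ⟨i, hnd, hcase⟩ := H u w hle hne hdeg
    have hsu : cs.length u < cs.length (cs.simple i * u) := ascent_of_not_descent cs hnd
    rcases hcase with hnle | ⟨hsw_le, hsw_ne⟩
    · -- Case B : `s u ≰ w`; pass to the isomorphic interval `[su, sw]`.
      have hsw : cs.length w < cs.length (cs.simple i * w) := by
        rcases Nat.lt_or_ge (cs.length w) (cs.length (cs.simple i * w)) with h | h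
        · exact h
        · exact absurd (Z2 cs hle hsu (lt_of_le_of_ne h (cs.length_simple_mul_ne w i))) hnle
      have F1 : ∀ x : W, BruhatLE cs u x → BruhatLE cs x w →
          cs.length x < cs.length (cs.simple i * x) := by
        intro x hux hxw
        rcases Nat.lt_or_ge (cs.length x) (cs.length (cs.simple i * x)) with h | h
        · exact h
        · exact absurd ((Z2 cs hux hsu
            (lt_of_le_of_ne h (cs.length_simple_mul_ne x i))).trans hxw) hnle
      have F2 : ∀ y : W, BruhatLE cs (cs.simple i * u) y →
          BruhatLE cs y (cs.simple i * w) →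
          cs.length (cs.simple i * y) < cs.length y := by
        intro y h1 h2
        rcases Nat.lt_or_ge (cs.length (cs.simple i * y)) (cs.length y) with h | h
        · exact h
        · exfalso
          have hy : cs.length y < cs.length (cs.simple i * y) :=
            lt_of_le_of_ne h (Ne.symm (cs.length_simple_mul_ne y i))
          have hyw : BruhatLE cs y w := by
            have := Z4 cs h2 hy (by rw [cs.simple_mul_simple_cancel_left]; exact hsw)
            rwa [cs.simple_mul_simple_cancel_left] at this
          exact hnle (h1.trans hyw)
      have memB : ∀ y : W, BruhatLE cs (cs.simple i * u) y →
          BruhatLE cs y (cs.simple i * w) →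
          BruhatLE cs u (cs.simple i * y) ∧ BruhatLE cs (cs.simple i * y) w := by
        intro y h1 h2
        have huy : BruhatLE cs u y := (bruhatLE_smul_of_ascent cs hsu).trans h1
        constructor
        · exact Z4 cs huy hsu (F2 y h1 h2)
        · have := Z3 cs h2 (F2 y h1 h2)
            (by rw [cs.simple_mul_simple_cancel_left]; exact hsw)
          rwa [cs.simple_mul_simple_cancel_left] at this
      have hle' : BruhatLE cs (cs.simple i * u) (cs.simple i * w) := Z1 cs hle hsu hsw
      have hne' : cs.simple i * u ≠ cs.simple i * w := by
        intro h
        apply hne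
        have := congrArg (fun z => cs.simple i * z) h
        simpa [cs.simple_mul_simple_cancel_left] using this
      have hdeg' : bruhatDeg cs (cs.simple i * u) (cs.simple i * w) (cs.simple i * u)
          = cs.length (cs.simple i * w) - cs.length (cs.simple i * u) := by
        have e : bruhatDeg cs (cs.simple i * u) (cs.simple i * w) (cs.simple i * u)
            = bruhatDeg cs u w u := by
          apply Nat.card_congr
          refine ⟨fun y => ⟨cs.simple i * y.1, ⟨(memB y.1 y.2.1.1 y.2.1.2).1,
              (memB y.1 y.2.1.1 y.2.1.2).2⟩, ?_⟩,
            fun x => ⟨cs.simple i * x.1, ⟨Z1 cs x.2.1.1 hsu (F1 x.1 x.2.1.1 x.2.1.2),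
              Z1 cs x.2.1.2 (F1 x.1 x.2.1.1 x.2.1.2) hsw⟩, ?_⟩, ?_, ?_⟩
          · have h2 := y.2.2
            have heq : u⁻¹ * (cs.simple i * y.1) = (cs.simple i * u)⁻¹ * y.1 := by
              simp only [mul_inv_rev, cs.inv_simple, mul_assoc]
            rw [heq]
            exact h2
          · have h2 := x.2.2
            have heq : (cs.simple i * u)⁻¹ * (cs.simple i * x.1) = u⁻¹ * x.1 := by
              simp only [mul_inv_rev, cs.inv_simple, mul_assoc,
                cs.simple_mul_simple_cancel_left]
            rw [heq]
            exact h2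
          · intro y
            apply Subtype.ext
            show cs.simple i * (cs.simple i * y.1) = y.1
            rw [cs.simple_mul_simple_cancel_left]
          · intro x
            apply Subtype.ext
            show cs.simple i * (cs.simple i * x.1) = x.1
            rw [cs.simple_mul_simple_cancel_left]
        rw [e, hdeg]
        have e1 := length_smul_eq_add_one cs hsu
        have e2 := length_smul_eq_add_one cs hsw
        omega
      have hm' : n * n - cs.length (cs.simple i * w) ≤ m := by
        have h1 := length_le_bound cs (cs.simple i * w)
        have h2 := length_smul_eq_add_one cs hsw
        omega
      obtain ⟨f', hf'⟩ := IH (cs.simple i * u) (cs.simple i * w) hm' hle' hne' hdeg'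
      let g : BruhatInterval cs u w ≃o
          BruhatInterval cs (cs.simple i * u) (cs.simple i * w) :=
        { toFun := fun x => ⟨cs.simple i * x.1,
            Z1 cs x.2.1 hsu (F1 x.1 x.2.1 x.2.2),
            Z1 cs x.2.2 (F1 x.1 x.2.1 x.2.2) hsw⟩,
          invFun := fun y => ⟨cs.simple i * y.1,
            (memB y.1 y.2.1 y.2.2).1, (memB y.1 y.2.1 y.2.2).2⟩,
          left_inv := fun x => by
            apply Subtype.ext
            show cs.simple i * (cs.simple i * x.1) = x.1
            rw [cs.simple_mul_simple_cancel_left],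
          right_inv := fun y => by
            apply Subtype.ext
            show cs.simple i * (cs.simple i * y.1) = y.1
            rw [cs.simple_mul_simple_cancel_left],
          map_rel_iff' := by
            intro x y
            constructor
            · intro h
              have h' : BruhatLE cs (cs.simple i * x.1) (cs.simple i * y.1) := h
              have := Z3 cs h'
                (F2 (cs.simple i * x.1) (Z1 cs x.2.1 hsu (F1 x.1 x.2.1 x.2.2))
                  (Z1 cs x.2.2 (F1 x.1 x.2.1 x.2.2) hsw))
                (F2 (cs.simple i * y.1) (Z1 cs y.2.1 hsu (F1 y.1 y.2.1 y.2.2))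
                  (Z1 cs y.2.2 (F1 y.1 y.2.1 y.2.2) hsw))
              rw [cs.simple_mul_simple_cancel_left, cs.simple_mul_simple_cancel_left] at this
              exact this
            · intro h
              exact Z1 cs h (F1 x.1 x.2.1 x.2.2) (F1 y.1 y.2.1 y.2.2) }
      exact ⟨fun x => g.symm (f' (g x)), specialMatching_transport g hf'⟩
    · exact matchingA cs hle hsu (BruhatLE.length_lt hsw_le hsw_ne)

end Main

theorem conjC4_implies_special_matching
    {W : Type*} [Group W] {n : ℕ} (hn : 1 ≤ n)
    (cs : CoxeterSystem (CoxeterMatrix.Aₙ n) W)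
    (H : ∀ u w : W, BruhatLE cs u w → u ≠ w →
      bruhatDeg cs u w u = cs.length w - cs.length u →
      ∃ i : Fin n, ¬ cs.IsLeftDescent u i ∧
        (¬ BruhatLE cs (cs.simple i * u) w ∨
          (BruhatLE cs (cs.simple i * w) w ∧ cs.simple i * w ≠ w))) :
    ∀ u w : W, BruhatLE cs u w → u ≠ w →
      bruhatDeg cs u w u = cs.length w - cs.length u →
      ∃ f : BruhatInterval cs u w → BruhatInterval cs u w, IsSpecialMatching f := by
  intro u w hle hne hdeg
  exact main_aux cs H (n * n - cs.length w) u w le_rfl hle hne hdeg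

end Paper
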